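/- arXiv:1604.04217 — 16 statements merged into one kernel-verified Lean document; each statement's English description precedes it below -/
import Mathlib

section
/- For every real number s ≥ 2, one has √(1 − 4/s²) ≥ (2π − 2·arccos(−2/s))/s, with equality if and only if s = 2. (In the Half-Chord strategy this says that the fast robot finishes exploring the whole boundary no later than the slow robot reaches the endpoint B of the half-chord.) -/
open Real

/-- For every real `s ≥ 2`, `√(1 − 4/s²) ≥ (2π − 2·arccos(−2/s))/s`,
with equality if and only if `s = 2`. -/
theorem halfChord_fast_finishes_first (s : ℝ) (hs : 2 ≤ s) :
    Real.sqrt (1 - 4 / s ^ 2) ≥ (2 * Real.pi - 2 * Real.arccos (-2 / s)) / s ∧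
    (Real.sqrt (1 - 4 / s ^ 2) = (2 * Real.pi - 2 * Real.arccos (-2 / s)) / s ↔ s = 2) := by
  have hs0 : (0:ℝ) < s := lt_of_lt_of_le (by norm_num) hs
  set x : ℝ := 2 / s with hx
  have hx0 : 0 < x := by positivity
  have hx1 : x ≤ 1 := by rw [hx, div_le_one hs0]; linarith
  have hneg : (-2 : ℝ) / s = -x := by rw [hx]; ring
  have harc : arccos (-2 / s) = π - arccos x := by rw [hneg, arccos_neg]
  have hsq : 1 - 4 / s ^ 2 = 1 - x ^ 2 := by rw [hx]; field_simp; norm_num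
  set t : ℝ := arccos x with ht
  have hct : cos t = x := cos_arccos (by linarith) hx1
  have hst : sin t = Real.sqrt (1 - x ^ 2) := sin_arccos x
  have ht0 : 0 ≤ t := arccos_nonneg x
  have htlt : t < π / 2 := arccos_lt_pi_div_two.mpr hx0
  have hRHS : (2 * π - 2 * arccos (-2 / s)) / s = t * x := by
    rw [harc, hx]; field_simp; ring
  have key : ∀ _ : 0 < t, t * x < Real.sqrt (1 - x ^ 2) := by
    intro htp
    have := lt_tan htp htlt
    rw [tan_eq_sin_div_cos, hct, lt_div_iff₀ hx0] at this
    rwa [hst] at this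
  constructor
  · rw [hsq, hRHS]
    rcases eq_or_lt_of_le ht0 with h | h
    · rw [← h]; simpa using Real.sqrt_nonneg _
    · exact le_of_lt (key h)
  · constructor
    · intro heq
      by_contra hne
      have hs2 : 2 < s := lt_of_le_of_ne hs (Ne.symm hne)
      have hxl : x < 1 := by rw [hx, div_lt_one hs0]; linarith
      have htp : 0 < t := arccos_pos.mpr hxl
      have := key htp
      rw [hsq, hRHS] at heq
      linarith
    · rintro rfl
      have : x = 1 := by norm_num [hx]
      rw [hsq, hRHS, this, ht, this]
      simp
end

section
/- For every real number s ≥ 2 and every a ∈ [0, 1], (1 + a)/s + √(1 + (1+a)²/s² + 2·((1+a)/s)·cos(1/2 − a)) ≤ (1 + 2·arccos(−2/s))/s + √(1 − 4/s²). (This is the worst-case evacuation-time bound for the Half-Chord strategy when the exit is found during Phase I, where a is the arc length explored by the fast robot after reaching the boundary.) -/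
open Real

/-- Phase I bound for the Half-Chord strategy: for `s ≥ 2` and `a ∈ [0,1]`,
`(1+a)/s + √(1 + (1+a)²/s² + 2·((1+a)/s)·cos(1/2 − a)) ≤ (1 + 2·arccos(−2/s))/s + √(1 − 4/s²)`. -/
theorem halfChord_phaseI (s a : ℝ) (hs : 2 ≤ s) (ha : a ∈ Set.Icc (0 : ℝ) 1) :
    (1 + a) / s +
      Real.sqrt (1 + (1 + a) ^ 2 / s ^ 2 + 2 * ((1 + a) / s) * Real.cos (1 / 2 - a)) ≤
    (1 + 2 * Real.arccos (-2 / s)) / s + Real.sqrt (1 - 4 / s ^ 2) := by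
  obtain ⟨ha0, ha1⟩ := ha
  have hs0 : (0:ℝ) < s := by linarith
  have hq : (0:ℝ) ≤ (1 + a) / s := by positivity
  -- Step 1: bound the LHS square root
  have hsqrtL : Real.sqrt (1 + (1 + a) ^ 2 / s ^ 2 + 2 * ((1 + a) / s) * Real.cos (1 / 2 - a))
      ≤ 1 + (1 + a) / s := by
    have harg : 1 + (1 + a) ^ 2 / s ^ 2 + 2 * ((1 + a) / s) * Real.cos (1 / 2 - a)
        ≤ (1 + (1 + a) / s) ^ 2 := by
      have hc := Real.cos_le_one (1 / 2 - a)
      have h1 : 2 * ((1 + a) / s) * Real.cos (1 / 2 - a) ≤ 2 * ((1 + a) / s) := by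
        nlinarith
      have h2 : (1 + a) ^ 2 / s ^ 2 = ((1 + a) / s) ^ 2 := by
        field_simp
      nlinarith
    calc Real.sqrt (1 + (1 + a) ^ 2 / s ^ 2 + 2 * ((1 + a) / s) * Real.cos (1 / 2 - a))
        ≤ Real.sqrt ((1 + (1 + a) / s) ^ 2) := Real.sqrt_le_sqrt harg
      _ = 1 + (1 + a) / s := Real.sqrt_sq (by positivity)
  -- Step 2: arccos(-2/s) = π/2 + arcsin(2/s)
  have harccos : Real.arccos (-2 / s) = π / 2 + Real.arcsin (2 / s) := by
    have : (-2 : ℝ) / s = -(2 / s) := by ring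
    rw [this, Real.arccos_neg, Real.arccos]
    ring
  -- Step 3: arcsin(2/s) ≥ 2/s
  have h2s1 : 2 / s ≤ 1 := by
    rw [div_le_one hs0]; linarith
  have h2s0 : (0:ℝ) ≤ 2 / s := by positivity
  have harcsin : 2 / s ≤ Real.arcsin (2 / s) := by
    have hsin := Real.sin_arcsin (by linarith : (-1:ℝ) ≤ 2 / s) h2s1
    have hnn : 0 ≤ Real.arcsin (2 / s) := Real.arcsin_nonneg.mpr h2s0
    have := Real.sin_le hnn
    linarith
  -- Step 4: √(1 - 4/s²) ≥ 1 - 4/s²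
  have h4s : (0:ℝ) ≤ 1 - 4 / s ^ 2 := by
    have : 4 / s ^ 2 ≤ 1 := by
      rw [div_le_one (by positivity)]
      nlinarith
    linarith
  have hsqrtR : 1 - 4 / s ^ 2 ≤ Real.sqrt (1 - 4 / s ^ 2) := by
    have h1 : (1 - 4 / s ^ 2) ^ 2 ≤ 1 - 4 / s ^ 2 := by
      nlinarith [mul_nonneg h4s (show (0:ℝ) ≤ 4 / s ^ 2 by positivity)]
    calc 1 - 4 / s ^ 2 = Real.sqrt ((1 - 4 / s ^ 2) ^ 2) := (Real.sqrt_sq h4s).symm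
      _ ≤ Real.sqrt (1 - 4 / s ^ 2) := Real.sqrt_le_sqrt h1
  -- Step 5: combine
  have hpi : (3:ℝ) < π := Real.pi_gt_three
  have hA : 1 + π + 4 / s ≤ 1 + 2 * Real.arccos (-2 / s) := by
    have h42 : (4:ℝ) / s = 2 * (2 / s) := by ring
    rw [harccos]; linarith
  have hB : (1 + π + 4 / s) / s ≤ (1 + 2 * Real.arccos (-2 / s)) / s := by
    gcongr
  have hC : (1 + π + 4 / s) / s = (1 + π) / s + 4 / s ^ 2 := by
    field_simp
  have hD : 2 * (1 + a) / s ≤ (1 + π) / s := by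
    gcongr; linarith
  have hE : 2 * (1 + a) / s = (1 + a) / s + (1 + a) / s := by ring
  linarith
end

section
/- For every real number s ≥ 2, one has 2/s + √(1 + 4/s² + 4/s) ≤ (1 + 2·arccos(−2/s))/s + √(1 − 4/s²); equivalently, 1 + 4/s ≤ (1 + 2·arccos(−2/s))/s + √(1 − 4/s²). -/
open Real

/-- Crude Phase I bound for the Half-Chord strategy: for `s ≥ 2`,
`2/s + √(1 + 4/s² + 4/s) ≤ (1 + 2·arccos(−2/s))/s + √(1 − 4/s²)`; equivalently
`1 + 4/s ≤ (1 + 2·arccos(−2/s))/s + √(1 − 4/s²)`. -/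
theorem halfChord_phaseI_crude (s : ℝ) (hs : 2 ≤ s) :
    2 / s + Real.sqrt (1 + 4 / s ^ 2 + 4 / s) ≤
      (1 + 2 * Real.arccos (-2 / s)) / s + Real.sqrt (1 - 4 / s ^ 2) ∧
    1 + 4 / s ≤ (1 + 2 * Real.arccos (-2 / s)) / s + Real.sqrt (1 - 4 / s ^ 2) := by
  have hs0 : (0:ℝ) < s := lt_of_lt_of_le (by norm_num) hs
  set x : ℝ := 2 / s with hx
  have hx0 : 0 < x := div_pos (by norm_num) hs0
  have hx1 : x ≤ 1 := by
    rw [hx, div_le_one hs0]; linarith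
  have hxsq : 4 / s ^ 2 = x ^ 2 := by
    rw [hx]; field_simp; ring
  -- arcsin x ≥ x
  have harcsin : x ≤ arcsin x := by
    have hpi := Real.pi_gt_three
    rw [Real.le_arcsin_iff_sin_le ⟨by linarith, by linarith⟩ ⟨by linarith, hx1⟩]
    exact Real.sin_le hx0.le
  -- arccos (-x) ≥ π/2 + x
  have harccos : π / 2 + x ≤ arccos (-x) := by
    rw [Real.arccos_neg, Real.arccos_eq_pi_div_two_sub_arcsin]
    have : π - (π / 2 - arcsin x) = π / 2 + arcsin x := by ring
    rw [this]
    linarith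
  -- sqrt (1 - x^2) ≥ 1 - x^2
  have hsq : 1 - x ^ 2 ≤ Real.sqrt (1 - x ^ 2) := by
    have h0 : 0 ≤ 1 - x ^ 2 := by nlinarith
    nlinarith [Real.sq_sqrt h0, Real.sqrt_nonneg (1 - x ^ 2),
      sq_nonneg (Real.sqrt (1 - x ^ 2) - (1 - x ^ 2))]
  -- the main inequality
  have hmain : 1 + 4 / s ≤ (1 + 2 * Real.arccos (-2 / s)) / s + Real.sqrt (1 - 4 / s ^ 2) := by
    have hxs : x * s = 2 := by rw [hx]; field_simp
    have h4s : 4 / s = 2 * x := by rw [hx]; ring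
    rw [hxsq, h4s]
    have hneg : (-2 : ℝ) / s = -x := by rw [hx]; ring
    rw [hneg]
    have h1 : (1 + 2 * (π / 2 + x)) / s ≤ (1 + 2 * arccos (-x)) / s := by
      gcongr
    have hdiv : (1 + 2 * (π / 2 + x)) / s = (1 + π + 2 * x) * x / 2 := by
      rw [hx]; field_simp; ring
    have hpi := Real.pi_gt_three
    nlinarith [mul_pos hx0 hx0]
  refine ⟨?_, hmain⟩
  have hsqrt1 : Real.sqrt (1 + 4 / s ^ 2 + 4 / s) = 1 + 2 / s := by
    rw [show 1 + 4 / s ^ 2 + 4 / s = (1 + 2 / s) ^ 2 by field_simp; ring]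
    exact Real.sqrt_sq (by positivity)
  rw [hsqrt1]
  calc 2 / s + (1 + 2 / s) = 1 + 4 / s := by ring
  _ ≤ _ := hmain
end

section
/- Let s ≥ 2 be real, let φ = arccos(−2/s), and let τ ∈ [0, (2φ − 1)/s]. Identify the plane with the complex numbers, with the unit disk centered at 0. Then the distance between the point S = (2/s)·exp(i(π + φ − sτ/2)) and the point E = exp(i(2φ − sτ)) satisfies |S − E| ≤ τ + √(1 − 4/s²). (This is the key estimate for Phase II of the Half-Chord strategy: if the fast robot, exploring the boundary counterclockwise, finds the exit E with τ time units remaining in Phase II, the slow robot, located at S on the circle of radius 2/s, can reach the exit within τ + √(1 − 4/s²) additional time.) -/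
open Real Complex

lemma halfChord_aux (r m τ c σ : ℝ) (hr0 : 0 < r) (hm0 : 0 ≤ m) (hτ0 : 0 ≤ τ)
    (hσ : σ ≤ τ / r) (hc : 1 - (τ / r) ^ 2 / 2 ≤ c) (hmsq : m ^ 2 = 1 - r ^ 2) :
    1 + r ^ 2 - 2 * r ^ 2 * c + 2 * r * m * σ ≤ (τ + m) ^ 2 := by
  have h1 : 2 * r * m * σ ≤ 2 * m * τ := by
    have h := mul_le_mul_of_nonneg_left hσ (show (0:ℝ) ≤ 2 * r * m by positivity)
    have e : 2 * r * m * (τ / r) = 2 * m * τ := by field_simp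
    linarith
  have h2 : 2 * r ^ 2 * (1 - c) ≤ τ ^ 2 := by
    have h := mul_le_mul_of_nonneg_left hc (show (0:ℝ) ≤ 2 * r ^ 2 by positivity)
    have e : 2 * r ^ 2 * (1 - (τ / r) ^ 2 / 2) = 2 * r ^ 2 - τ ^ 2 := by
      field_simp
    linarith
  nlinarith [h1, h2, hmsq]

/-- Phase II estimate for the Half-Chord strategy: for `s ≥ 2`, `φ = arccos(−2/s)` and
`τ ∈ [0, (2φ − 1)/s]`, the distance between `S = (2/s)·exp(i(π + φ − sτ/2))` and
`E = exp(i(2φ − sτ))` is at most `τ + √(1 − 4/s²)`. -/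
theorem halfChord_phaseII (s τ : ℝ) (hs : 2 ≤ s)
    (hτ : τ ∈ Set.Icc (0 : ℝ) ((2 * Real.arccos (-2 / s) - 1) / s)) :
    ‖(((2 / s : ℝ) : ℂ) *
          Complex.exp (Complex.I * ((Real.pi + Real.arccos (-2 / s) - s * τ / 2 : ℝ) : ℂ)) -
        Complex.exp (Complex.I * ((2 * Real.arccos (-2 / s) - s * τ : ℝ) : ℂ)))‖ ≤
    τ + Real.sqrt (1 - 4 / s ^ 2) := by
  obtain ⟨hτ0, hτ1⟩ := hτ
  have hs0 : (0:ℝ) < s := by linarith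
  have h2s : (0:ℝ) < 2 / s := by positivity
  have hφ : ∃ x, Real.arccos (-2 / s) = x := ⟨_, rfl⟩
  obtain ⟨φ, hφ⟩ := hφ
  rw [hφ]
  rw [hφ] at hτ1
  have hnd : (-2:ℝ) / s = -(2 / s) := neg_div s 2
  have ha : (-1:ℝ) ≤ -2 / s := by
    have h1 : 2 / s ≤ 1 := by rw [div_le_one hs0]; linarith
    linarith [hnd]
  have hb : (-2:ℝ) / s ≤ 1 := by linarith [hnd]
  have hcosφ : Real.cos φ = -(2 / s) := by
    rw [← hφ, Real.cos_arccos ha hb]; ring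
  have hsinsq : Real.sin φ ^ 2 = 1 - (2 / s) ^ 2 := by
    have := Real.sin_sq_add_cos_sq φ
    nlinarith [this, hcosφ]
  have hm : Real.sin φ = Real.sqrt (1 - 4 / s ^ 2) := by
    rw [← hφ, Real.sin_arccos]
    congr 1
    ring
  have hm0 : 0 ≤ Real.sin φ := by rw [hm]; positivity
  set θ1 : ℝ := Real.pi + φ - s * τ / 2 with hθ1
  set θ2 : ℝ := 2 * φ - s * τ with hθ2
  have hz : ((2 / s : ℝ) : ℂ) * Complex.exp (Complex.I * ((θ1 : ℝ) : ℂ)) -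
      Complex.exp (Complex.I * ((θ2 : ℝ) : ℂ)) =
      ((2 / s * Real.cos θ1 - Real.cos θ2 : ℝ) : ℂ) +
        ((2 / s * Real.sin θ1 - Real.sin θ2 : ℝ) : ℂ) * Complex.I := by
    rw [mul_comm Complex.I ((θ1:ℝ):ℂ), mul_comm Complex.I ((θ2:ℝ):ℂ),
      Complex.exp_mul_I, Complex.exp_mul_I]
    push_cast
    ring
  rw [hz, Complex.norm_add_mul_I, ← hm]
  have h1 : Real.cos θ1 * Real.cos θ2 + Real.sin θ1 * Real.sin θ2 =
      2 / s * Real.cos (s * τ / 2) - Real.sin φ * Real.sin (s * τ / 2) := by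
    rw [← Real.cos_sub]
    have e : θ1 - θ2 = Real.pi - (φ - s * τ / 2) := by rw [hθ1, hθ2]; ring
    rw [e, Real.cos_pi_sub, Real.cos_sub, hcosφ]
    ring
  have hXY : (2 / s * Real.cos θ1 - Real.cos θ2) ^ 2 +
      (2 / s * Real.sin θ1 - Real.sin θ2) ^ 2 =
      1 + (2 / s) ^ 2 - 2 * (2 / s) ^ 2 * Real.cos (s * τ / 2) +
        2 * (2 / s) * Real.sin φ * Real.sin (s * τ / 2) := by
    have s1 := Real.sin_sq_add_cos_sq θ1
    have s2 := Real.sin_sq_add_cos_sq θ2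
    linear_combination (2 / s) ^ 2 * s1 + s2 - 2 * (2 / s) * h1
  have hv0 : 0 ≤ s * τ / 2 := by positivity
  have hsinle : Real.sin (s * τ / 2) ≤ τ / (2 / s) := by
    have h := Real.sin_le hv0
    have e : s * τ / 2 = τ / (2 / s) := by field_simp
    linarith [e ▸ h]
  have hcosge : 1 - (τ / (2 / s)) ^ 2 / 2 ≤ Real.cos (s * τ / 2) := by
    have h := Real.one_sub_sq_div_two_le_cos (x := s * τ / 2)
    have e : τ / (2 / s) = s * τ / 2 := by field_simp
    rw [e]
    exact h
  have key : (2 / s * Real.cos θ1 - Real.cos θ2) ^ 2 +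
      (2 / s * Real.sin θ1 - Real.sin θ2) ^ 2 ≤ (τ + Real.sin φ) ^ 2 := by
    rw [hXY]
    exact halfChord_aux (2 / s) (Real.sin φ) τ (Real.cos (s * τ / 2))
      (Real.sin (s * τ / 2)) h2s hm0 hτ0 hsinle hcosge hsinsq
  have hτm : 0 ≤ τ + Real.sin φ := by linarith
  calc Real.sqrt ((2 / s * Real.cos θ1 - Real.cos θ2) ^ 2 +
        (2 / s * Real.sin θ1 - Real.sin θ2) ^ 2)
      ≤ Real.sqrt ((τ + Real.sin φ) ^ 2) := Real.sqrt_le_sqrt key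
    _ = τ + Real.sin φ := Real.sqrt_sq hτm
end

section
/- Let s ≥ 2 be real, let φ = arccos(−2/s), and let τ ∈ [0, (2π − 2φ)/s]. Identify the plane with the complex numbers, with the unit disk centered at 0. Set A = exp(2iφ), B = 1, M = (A + B)/2, and let C = M + τ·(B − M)/|B − M| be the point at distance τ from M on the segment from M to B. Then the distance between C and the point E = exp(i(2φ + sτ)) satisfies |C − E| ≤ √(1 − 4/s²) − τ. (This is the key estimate for Phase III of the Half-Chord strategy: if the fast robot, exploring the boundary counterclockwise past A, finds the exit E at time τ after the start of Phase III, the slow robot at C can reach the exit within the remaining √(1 − 4/s²) − τ time.) -/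
open Real Complex

lemma auxTan (x : ℝ) (h0 : 0 ≤ x) (h2 : x ≤ π/2) : x * Real.cos x ≤ Real.sin x := by
  rcases eq_or_lt_of_le h2 with h | h
  · rw [h]; simp [Real.cos_pi_div_two, Real.sin_pi_div_two]
  rcases eq_or_lt_of_le h0 with h0' | h0'
  · simp [← h0']
  have hcos : 0 < Real.cos x := Real.cos_pos_of_mem_Ioo ⟨by linarith [Real.pi_pos], h⟩
  have ht := Real.lt_tan h0' h
  rw [Real.tan_eq_sin_div_cos] at ht
  have := (lt_div_iff₀ hcos).1 ht
  linarith

lemma keyIneq (cp sp cb sb b t : ℝ) (h1 : sp^2 + cp^2 = 1) (h2 : sb^2 + cb^2 = 1)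
    (hcp : cp ≤ 0) (hsg : 0 ≤ sp*cb + cp*sb) (hmono : b*cb ≤ sb) (ht : t = -(b*cp)) :
    (cp^2 + t*sp - ((cp*cb - sp*sb)^2 - (sp*cb + cp*sb)^2))^2
      + (sp*cp - t*cp - 2*(sp*cb + cp*sb)*(cp*cb - sp*sb))^2 ≤ (sp - t)^2 := by
  subst ht
  have hid : (sp - (-(b*cp)))^2 -
      ((cp^2 + (-(b*cp))*sp - ((cp*cb - sp*sb)^2 - (sp*cb + cp*sb)^2))^2
      + (sp*cp - (-(b*cp))*cp - 2*(sp*cb + cp*sb)*(cp*cb - sp*sb))^2)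
      = 4*(-cp)*(sp*cb + cp*sb)*(sb - b*cb) := by
    linear_combination (1 - sb^4 - 2*cb^2*sb^2 - cb^4 - sp^2*sb^4 - 2*sp^2*cb^2*sb^2
      - sp^2*cb^4 - 2*cp*sp*sb^2*b - 4*cp*sp*cb*sb + 2*cp*sp*cb^2*b - cp^2 - cp^2*b^2
      - 2*cp^2*sb^2 - cp^2*sb^4 + 4*cp^2*cb*sb*b + 2*cp^2*cb^2 - 2*cp^2*cb^2*sb^2
      - cp^2*cb^4) * h1 + (-1 - sb^2 - cb^2 - 2*cp*sp*b + 2*cp^2) * h2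
  nlinarith [mul_nonneg (mul_nonneg (neg_nonneg.2 hcp) hsg) (sub_nonneg.2 hmono)]

/-- Phase III estimate for the Half-Chord strategy: for `s ≥ 2`, `φ = arccos(−2/s)`,
`τ ∈ [0, (2π − 2φ)/s]`, with `A = exp(2iφ)`, `B = 1`, `M = (A+B)/2` and
`C = M + τ·(B − M)/|B − M|`, the distance between `C` and `E = exp(i(2φ + sτ))`
is at most `√(1 − 4/s²) − τ`. -/
theorem halfChord_phaseIII (s τ : ℝ) (hs : 2 ≤ s)
    (hτ : τ ∈ Set.Icc (0 : ℝ) ((2 * Real.pi - 2 * Real.arccos (-2 / s)) / s))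
    (A B M C E : ℂ)
    (hA : A = Complex.exp (2 * Complex.I * ((Real.arccos (-2 / s) : ℝ) : ℂ)))
    (hB : B = 1)
    (hM : M = (A + B) / 2)
    (hC : C = M + (τ : ℂ) * (B - M) / ((‖B - M‖ : ℝ) : ℂ))
    (hE : E = Complex.exp (Complex.I * ((2 * Real.arccos (-2 / s) + s * τ : ℝ) : ℂ))) :
    ‖C - E‖ ≤ Real.sqrt (1 - 4 / s ^ 2) - τ := by
  have hs0 : (0:ℝ) < s := by linarith
  set φ := Real.arccos (-2/s) with hφdef
  have hc : Real.cos φ = -2/s := by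
    apply Real.cos_arccos
    · rw [neg_div, neg_le_neg_iff, div_le_one hs0]; exact hs
    · have : -2/s ≤ 0 := div_nonpos_of_nonpos_of_nonneg (by norm_num) hs0.le
      linarith
  have hφ0 : 0 ≤ φ := Real.arccos_nonneg _
  have hφπ : φ ≤ π := Real.arccos_le_pi _
  have hsin : Real.sin φ = Real.sqrt (1 - 4/s^2) := by
    rw [hφdef, Real.sin_arccos]; congr 1; ring
  have hsφ0 : 0 ≤ Real.sin φ := Real.sin_nonneg_of_nonneg_of_le_pi hφ0 hφπ
  have hcp0 : Real.cos φ ≤ 0 := by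
    rw [hc]; exact div_nonpos_of_nonpos_of_nonneg (by norm_num) hs0.le
  have hφhalf : π/2 ≤ φ := by
    by_contra h; push_neg at h
    have hpos : 0 < Real.cos φ := Real.cos_pos_of_mem_Ioo ⟨by linarith [Real.pi_pos], h⟩
    rw [hc] at hpos
    have : -2/s < 0 := div_neg_of_neg_of_pos (by norm_num) hs0
    linarith
  obtain ⟨hτ0, hτub⟩ := hτ
  set β := s*τ/2 with hβdef
  have hβ0 : 0 ≤ β := by positivity
  have hβle : β ≤ π - φ := by
    have h := (le_div_iff₀ hs0).1 hτub
    rw [hβdef]; nlinarith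
  have hβhalf : β ≤ π/2 := by linarith
  have hτβ : τ = -(β * Real.cos φ) := by
    rw [hc, hβdef]; field_simp
  -- nonnegativity of RHS
  have hδ := auxTan (π - φ) (by linarith) (by linarith)
  rw [Real.cos_pi_sub, Real.sin_pi_sub] at hδ
  have hK : 0 ≤ Real.sin φ - τ := by
    rw [hτβ]
    nlinarith [mul_nonneg (sub_nonneg.2 hβle) (neg_nonneg.2 hcp0)]
  -- complex components
  have hsτ : s * τ = 2 * β := by rw [hβdef]; ring
  have hA' : A = Complex.exp (((2*φ : ℝ) : ℂ) * Complex.I) := by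
    rw [hA]; congr 1; push_cast; ring
  have hE' : E = Complex.exp (((2*φ + s*τ : ℝ) : ℂ) * Complex.I) := by
    rw [hE]; congr 1; push_cast; ring
  have hAre : A.re = Real.cos (2*φ) := by rw [hA']; exact Complex.exp_ofReal_mul_I_re _
  have hAim : A.im = Real.sin (2*φ) := by rw [hA']; exact Complex.exp_ofReal_mul_I_im _
  have hEre : E.re = Real.cos (2*φ + s*τ) := by rw [hE']; exact Complex.exp_ofReal_mul_I_re _
  have hEim : E.im = Real.sin (2*φ + s*τ) := by rw [hE']; exact Complex.exp_ofReal_mul_I_im _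
  have hBMre : (B - M).re = (1 - Real.cos (2*φ))/2 := by
    rw [hM, hB]; simp [Complex.sub_re, Complex.add_re, hAre]; ring
  have hBMim : (B - M).im = -(Real.sin (2*φ))/2 := by
    rw [hM, hB]; simp [Complex.sub_im, Complex.add_im, hAim]; ring
  have hcos2φ : Real.cos (2*φ) = Real.cos φ^2 - Real.sin φ^2 := by
    rw [two_mul, Real.cos_add]; ring
  have hsin2φ : Real.sin (2*φ) = 2 * Real.sin φ * Real.cos φ := by
    rw [two_mul, Real.sin_add]; ring
  have hpy : Real.sin φ^2 + Real.cos φ^2 = 1 := Real.sin_sq_add_cos_sq φ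
  have habsBM : ‖B - M‖ = Real.sin φ := by
    rw [Complex.norm_def, Complex.normSq_apply, hBMre, hBMim]
    rw [show (1 - Real.cos (2*φ))/2 * ((1 - Real.cos (2*φ))/2) +
        -(Real.sin (2*φ))/2 * (-(Real.sin (2*φ))/2) = Real.sin φ^2 by
      rw [hcos2φ, hsin2φ]; linear_combination ((Real.sin φ^2 + Real.cos φ^2 - 1)/4) * hpy]
    exact Real.sqrt_sq hsφ0
  rcases eq_or_lt_of_le hs with hs2 | hs2
  · -- s = 2 degenerate case
    have hφπ' : φ = π := by rw [hφdef, ← hs2]; norm_num [Real.arccos_neg_one]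
    have hτz : τ = 0 := by
      rw [hφπ', ← hs2] at hτub
      have : (2 * π - 2 * π) / 2 = 0 := by ring
      rw [this] at hτub; linarith
    have hA1 : A = 1 := by
      have h2 : ((2*π : ℝ) : ℂ) * Complex.I = 2*(π:ℂ)*Complex.I := by push_cast; ring
      rw [hA', hφπ', h2]; exact Complex.exp_two_pi_mul_I
    have hE1 : E = 1 := by
      have h1 : (2 * π + s * 0 : ℝ) = 2 * π := by ring
      have h2 : ((2*π : ℝ) : ℂ) * Complex.I = 2*(π:ℂ)*Complex.I := by push_cast; ring
      rw [hE', hτz, hφπ', h1, h2]; exact Complex.exp_two_pi_mul_I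
    have hC1 : C = 1 := by rw [hC, hM, hA1, hB, hτz]; norm_num
    rw [hC1, hE1, hτz, ← hs2]; norm_num
  -- main case 2 < s
  have hsp : 0 < Real.sin φ := by
    rw [hsin]
    apply Real.sqrt_pos.2
    have : 4 / s^2 < 1 := by
      rw [div_lt_one (by positivity)]; nlinarith
    linarith
  have hsp' : Real.sin φ ≠ 0 := ne_of_gt hsp
  have hpy2 : Real.sin β^2 + Real.cos β^2 = 1 := Real.sin_sq_add_cos_sq β
  have hsg : 0 ≤ Real.sin φ * Real.cos β + Real.cos φ * Real.sin β := by
    rw [← Real.sin_add]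
    exact Real.sin_nonneg_of_nonneg_of_le_pi (by linarith) (by linarith)
  have hmono : β * Real.cos β ≤ Real.sin β := auxTan β hβ0 hβhalf
  have hγcos : Real.cos (2*φ + s*τ) =
      (Real.cos φ * Real.cos β - Real.sin φ * Real.sin β)^2
      - (Real.sin φ * Real.cos β + Real.cos φ * Real.sin β)^2 := by
    have h : 2*φ + s*τ = (φ+β) + (φ+β) := by rw [hsτ]; ring
    rw [h, Real.cos_add (φ+β), Real.cos_add φ β, Real.sin_add φ β]; ring
  have hγsin : Real.sin (2*φ + s*τ) =
      2 * (Real.sin φ * Real.cos β + Real.cos φ * Real.sin β)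
        * (Real.cos φ * Real.cos β - Real.sin φ * Real.sin β) := by
    have h : 2*φ + s*τ = (φ+β) + (φ+β) := by rw [hsτ]; ring
    rw [h, Real.sin_add (φ+β), Real.cos_add φ β, Real.sin_add φ β]; ring
  -- components of C - E
  have hMre : M.re = (Real.cos (2*φ) + 1)/2 := by
    rw [hM, hB, show ((A + 1)/2 : ℂ) = (A+1)/((2:ℝ):ℂ) by norm_num,
      Complex.div_ofReal_re, Complex.add_re, hAre]
    simp
  have hMim : M.im = Real.sin (2*φ)/2 := by
    rw [hM, hB, show ((A + 1)/2 : ℂ) = (A+1)/((2:ℝ):ℂ) by norm_num,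
      Complex.div_ofReal_im, Complex.add_im, hAim]
    simp
  have hmulre : ((τ:ℂ) * (B - M)).re = τ * (B - M).re := by
    simp [Complex.mul_re]
  have hmulim : ((τ:ℂ) * (B - M)).im = τ * (B - M).im := by
    simp [Complex.mul_im]
  have hCEre : (C - E).re = (Real.cos (2*φ) + 1)/2
      + τ * ((1 - Real.cos (2*φ))/2) / Real.sin φ - Real.cos (2*φ + s*τ) := by
    rw [hC, habsBM, Complex.sub_re, Complex.add_re, Complex.div_ofReal_re,
      hmulre, hMre, hBMre, hEre]
  have hCEim : (C - E).im = Real.sin (2*φ)/2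
      + τ * (-Real.sin (2*φ)/2) / Real.sin φ - Real.sin (2*φ + s*τ) := by
    rw [hC, habsBM, Complex.sub_im, Complex.add_im, Complex.div_ofReal_im,
      hmulim, hMim, hBMim, hEim]
  -- simplify components
  have h1 : (Real.cos (2*φ) + 1)/2 = Real.cos φ^2 := by
    rw [hcos2φ]; linear_combination (-(1:ℝ)/2) * hpy
  have h2 : (1 - Real.cos (2*φ))/2 = Real.sin φ^2 := by
    rw [hcos2φ]; linear_combination (-(1:ℝ)/2) * hpy
  have h3 : τ * Real.sin φ^2 / Real.sin φ = τ * Real.sin φ := by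
    field_simp
  have h4 : Real.sin (2*φ)/2 = Real.sin φ * Real.cos φ := by rw [hsin2φ]; ring
  have h5 : τ * (-Real.sin (2*φ)/2) / Real.sin φ = -(τ * Real.cos φ) := by
    rw [hsin2φ]; field_simp
  have hX : (C - E).re = Real.cos φ^2 + τ * Real.sin φ
      - ((Real.cos φ * Real.cos β - Real.sin φ * Real.sin β)^2
        - (Real.sin φ * Real.cos β + Real.cos φ * Real.sin β)^2) := by
    rw [hCEre, h1, h2, h3, hγcos]
  have hY : (C - E).im = Real.sin φ * Real.cos φ - τ * Real.cos φ
      - 2 * (Real.sin φ * Real.cos β + Real.cos φ * Real.sin β)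
        * (Real.cos φ * Real.cos β - Real.sin φ * Real.sin β) := by
    rw [hCEim, h4, h5, hγsin]; ring
  have key := keyIneq (Real.cos φ) (Real.sin φ) (Real.cos β) (Real.sin β) β τ
    hpy hpy2 hcp0 hsg hmono hτβ
  have habsCE : ‖C - E‖^2 = (C - E).re^2 + (C - E).im^2 := by
    rw [Complex.sq_norm, Complex.normSq_apply]; ring
  refine le_of_pow_le_pow_left₀ two_ne_zero ?_ ?_
  · rw [← hsin]; exact hK
  · rw [habsCE, hX, hY, ← hsin]
    linarith [key]
end

section
/- For every real s ∈ [1, 2], the value 1 + √(2 − 2·cos(s − 1)) is the greatest value of the function f(a) = (a + 1)/s + √(1 + ((a+1)/s)² − 2·((a+1)/s)·cos(a)) over a ∈ [0, s − 1]; that is, f(a) ≤ 1 + √(2 − 2·cos(s−1)) for all a ∈ [0, s−1], with equality at a = s − 1. (This is the worst-case evacuation time of the Both-to-the-Same-Point strategy when the exit is found before the slow robot reaches the boundary.) -/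
open Real

/-- Monotonicity in `t`: for `t ≤ 1`, `-1 ≤ c ≤ 1`,
`t + √(1+t²−2tc) ≤ 1 + √(2−2c)`. -/
lemma bsp_aux (t c : ℝ) (ht : t ≤ 1) (hc : c ≤ 1) (hc' : -1 ≤ c) :
    t + Real.sqrt (1 + t ^ 2 - 2 * t * c) ≤ 1 + Real.sqrt (2 - 2 * c) := by
  have h1 : (1 - c) ≤ Real.sqrt (2 - 2 * c) := by
    have h2 : (1 - c) = Real.sqrt ((1 - c) ^ 2) := (Real.sqrt_sq (by linarith)).symm
    rw [h2]
    apply Real.sqrt_le_sqrt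
    nlinarith
  have h0 : 0 ≤ Real.sqrt (2 - 2 * c) := Real.sqrt_nonneg _
  have key : Real.sqrt (1 + t ^ 2 - 2 * t * c) ≤ (1 - t) + Real.sqrt (2 - 2 * c) := by
    rw [Real.sqrt_le_iff]
    constructor
    · linarith
    · nlinarith [Real.sq_sqrt (by linarith : (0:ℝ) ≤ 2 - 2 * c)]
  linarith

/-- BSP strategy, exit found before the slow robot reaches the boundary:
for `s ∈ [1,2]`, `1 + √(2 − 2cos(s−1))` is the greatest value of
`f(a) = (a+1)/s + √(1 + ((a+1)/s)² − 2·((a+1)/s)·cos a)` over `a ∈ [0, s−1]`,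
with equality at `a = s − 1`. -/
theorem bsp_before_boundary (s : ℝ) (hs : s ∈ Set.Icc (1 : ℝ) 2) :
    (∀ a ∈ Set.Icc (0 : ℝ) (s - 1),
      (a + 1) / s +
          Real.sqrt (1 + ((a + 1) / s) ^ 2 - 2 * ((a + 1) / s) * Real.cos a) ≤
        1 + Real.sqrt (2 - 2 * Real.cos (s - 1))) ∧
    (s - 1 + 1) / s +
        Real.sqrt (1 + ((s - 1 + 1) / s) ^ 2 - 2 * ((s - 1 + 1) / s) * Real.cos (s - 1)) =
      1 + Real.sqrt (2 - 2 * Real.cos (s - 1)) := by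
  obtain ⟨hs1, hs2⟩ := hs
  have hspos : (0:ℝ) < s := by linarith
  constructor
  · intro a ⟨ha0, ha1⟩
    set t := (a + 1) / s with htdef
    have ht1 : t ≤ 1 := by
      rw [htdef, div_le_one hspos]; linarith
    have ht0 : 0 < t := by positivity
    have hcos : Real.cos (s - 1) ≤ Real.cos a := by
      apply Real.cos_le_cos_of_nonneg_of_le_pi ha0
      · linarith [Real.pi_gt_three]
      · exact ha1
    have hmono : Real.sqrt (1 + t ^ 2 - 2 * t * Real.cos a) ≤
        Real.sqrt (1 + t ^ 2 - 2 * t * Real.cos (s - 1)) := by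
      apply Real.sqrt_le_sqrt; nlinarith
    have := bsp_aux t (Real.cos (s - 1)) ht1 (Real.cos_le_one _) (Real.neg_one_le_cos _)
    linarith
  · have h1 : (s - 1 + 1) / s = 1 := by field_simp; ring
    rw [h1]
    norm_num
end

section
/- For every real s ∈ [1, 2], the function f(a) = (a + 1)/s + √(1 + ((a+1)/s)² − 2·((a+1)/s)·cos(a)) is monotone nondecreasing in a on the interval [0, s − 1]. -/
open Real

/-- For `s ∈ [1,2]`, the function
`f(a) = (a+1)/s + √(1 + ((a+1)/s)² − 2·((a+1)/s)·cos a)`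
is monotone nondecreasing on `[0, s − 1]`. -/
theorem bsp_before_boundary_monotone (s : ℝ) (hs : s ∈ Set.Icc (1 : ℝ) 2) :
    MonotoneOn
      (fun a : ℝ =>
        (a + 1) / s +
          Real.sqrt (1 + ((a + 1) / s) ^ 2 - 2 * ((a + 1) / s) * Real.cos a))
      (Set.Icc (0 : ℝ) (s - 1)) := by
  obtain ⟨hs1, hs2⟩ := hs
  rcases eq_or_lt_of_le hs1 with h1 | h1
  · -- s = 1 : the interval is a single point
    intro x hx y hy _
    have hx0 : x = 0 := le_antisymm (by simpa [← h1] using hx.2) hx.1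
    have hy0 : y = 0 := le_antisymm (by simpa [← h1] using hy.2) hy.1
    simp [hx0, hy0]
  · have hs0 : (0:ℝ) < s := by linarith
    set q : ℝ → ℝ := fun a => 1 + ((a + 1) / s) ^ 2 - 2 * ((a + 1) / s) * Real.cos a with hq
    have hqalt : ∀ a, q a = ((a+1)/s - Real.cos a)^2 + Real.sin a ^ 2 := by
      intro a
      have h := Real.sin_sq_add_cos_sq a
      simp only [hq]
      nlinarith [h]
    -- basic facts on the open interval
    have key : ∀ x ∈ Set.Ioo (0:ℝ) (s-1), 0 < q x ∧ 0 ≤ Real.sin x := by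
      intro x hx
      have hx0 : 0 < x := hx.1
      have hx1 : x < 1 := lt_of_lt_of_le hx.2 (by linarith)
      have hsin : 0 < Real.sin x :=
        Real.sin_pos_of_pos_of_lt_pi hx0 (by linarith [Real.pi_gt_three])
      refine ⟨?_, le_of_lt hsin⟩
      rw [hqalt]
      nlinarith [sq_nonneg ((x+1)/s - Real.cos x)]
    -- derivative of u
    have hu : ∀ x : ℝ, HasDerivAt (fun a : ℝ => (a+1)/s) (1/s) x := by
      intro x
      simpa using ((hasDerivAt_id x).add_const 1).div_const s
    -- derivative of q
    have hqd : ∀ x : ℝ, HasDerivAt q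
        ((2 * ((x+1)/s)^1 * (1/s)) -
          ((2*(1/s)) * Real.cos x + (2*((x+1)/s)) * (-Real.sin x))) x := by
      intro x
      have h1 : HasDerivAt (fun a : ℝ => ((a+1)/s)^2)
          (2 * ((x+1)/s)^1 * (1/s)) x := by
        simpa using (hu x).fun_pow 2
      have h2 : HasDerivAt (fun a : ℝ => 2*((a+1)/s) * Real.cos a)
          ((2*(1/s)) * Real.cos x + (2*((x+1)/s)) * (-Real.sin x)) x :=
        ((hu x).const_mul 2).mul (Real.hasDerivAt_cos x)
      simpa [hq] using (h1.const_add 1).fun_sub h2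
    -- full derivative on the open interval
    have hfd : ∀ x ∈ Set.Ioo (0:ℝ) (s-1),
        HasDerivAt (fun a : ℝ => (a + 1) / s +
          Real.sqrt (1 + ((a + 1) / s) ^ 2 - 2 * ((a + 1) / s) * Real.cos a))
          (1/s + ((2 * ((x+1)/s)^1 * (1/s)) -
            ((2*(1/s)) * Real.cos x + (2*((x+1)/s)) * (-Real.sin x))) / (2 * Real.sqrt (q x))) x := by
      intro x hx
      have hqx : q x ≠ 0 := ne_of_gt (key x hx).1
      exact (hu x).add ((hqd x).sqrt hqx)
    apply monotoneOn_of_deriv_nonneg (convex_Icc _ _)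
    · apply ContinuousOn.add
      · fun_prop
      · exact Real.continuous_sqrt.comp_continuousOn (by fun_prop)
    · rw [interior_Icc]
      intro x hx
      exact (hfd x hx).differentiableAt.differentiableWithinAt
    · rw [interior_Icc]
      intro x hx
      rw [(hfd x hx).deriv]
      obtain ⟨hqx, hsin⟩ := key x hx
      set u := (x+1)/s with hudef
      set c := Real.cos x
      set t := Real.sin x
      set r := Real.sqrt (q x) with hr
      have hr0 : 0 < r := Real.sqrt_pos.mpr hqx
      have habs : |u - c| ≤ r := by
        rw [hr, ← Real.sqrt_sq_eq_abs]
        apply Real.sqrt_le_sqrt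
        rw [hqalt]
        nlinarith [sq_nonneg t]
      have hcu : c - u ≤ r := by
        have := neg_abs_le (u - c)
        linarith [le_abs_self (u - c), this, habs, abs_nonneg (u-c)]
      have hu0 : 0 < u := by
        have : 0 < x + 1 := by linarith [hx.1]
        positivity
      -- numerator lower bound
      have hnum : -( (2/s) * r) ≤ (2 * u^1 * (1/s)) - ((2*(1/s)) * c + (2*u) * (-t)) := by
        have h2s : 0 < 2 / s := by positivity
        have hut : 0 ≤ u * t := mul_nonneg hu0.le hsin
        have : (2 * u^1 * (1/s)) - ((2*(1/s)) * c + (2*u) * (-t))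
            = (2/s) * (u - c) + 2 * (u * t) := by ring
        rw [this]
        nlinarith
      have hfrac : -(1/s) ≤ ((2 * u^1 * (1/s)) - ((2*(1/s)) * c + (2*u) * (-t))) / (2 * r) := by
        rw [le_div_iff₀ (by positivity)]
        have : -(1/s) * (2 * r) = -((2/s) * r) := by ring
        rw [this]
        exact hnum
      linarith
end

section
/- For every real s ∈ [1, 2], the value (2s + π + 4)/(s + 1) is the greatest value of the function g(d) = 1 + d/s + 2·sin((d·(1 + 1/s) + s − 1)/2) over d ∈ [0, s(π − s + 1)/(s + 1)]; that is, g(d) ≤ (2s + π + 4)/(s+1) on this interval, with equality at d = s(π − s + 1)/(s + 1). (This is the worst-case evacuation time of the Both-to-the-Same-Point strategy when the angle between the two robots at the moment the exit is found is at most π.) -/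
open Real

/-- BSP strategy, angle at most π case: for `s ∈ [1,2]`, `(2s + π + 4)/(s+1)` is the
greatest value of `g(d) = 1 + d/s + 2·sin((d·(1 + 1/s) + s − 1)/2)` over
`d ∈ [0, s(π − s + 1)/(s + 1)]`, with equality at `d = s(π − s + 1)/(s + 1)`. -/
theorem bsp_angle_le_pi (s : ℝ) (hs : s ∈ Set.Icc (1 : ℝ) 2) :
    (∀ d ∈ Set.Icc (0 : ℝ) (s * (Real.pi - s + 1) / (s + 1)),
      1 + d / s + 2 * Real.sin ((d * (1 + 1 / s) + s - 1) / 2) ≤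
        (2 * s + Real.pi + 4) / (s + 1)) ∧
    1 + (s * (Real.pi - s + 1) / (s + 1)) / s +
        2 * Real.sin (((s * (Real.pi - s + 1) / (s + 1)) * (1 + 1 / s) + s - 1) / 2) =
      (2 * s + Real.pi + 4) / (s + 1) := by
  have hs0 : (0 : ℝ) < s := lt_of_lt_of_le one_pos hs.1
  have hs0' : s ≠ 0 := ne_of_gt hs0
  have hs1 : s + 1 ≠ 0 := by positivity
  have harg : (s * (Real.pi - s + 1) / (s + 1)) * (1 + 1 / s) + s - 1 = Real.pi := by
    field_simp
    ring
  have hkey : 1 + (s * (Real.pi - s + 1) / (s + 1)) / s +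
      2 * Real.sin (((s * (Real.pi - s + 1) / (s + 1)) * (1 + 1 / s) + s - 1) / 2) =
      (2 * s + Real.pi + 4) / (s + 1) := by
    rw [harg]
    rw [show Real.pi / 2 = Real.pi / 2 from rfl, Real.sin_pi_div_two]
    field_simp
    ring
  refine ⟨fun d hd => ?_, hkey⟩
  have h1 : d / s ≤ (s * (Real.pi - s + 1) / (s + 1)) / s :=
    by gcongr; exact hd.2
  have h2 : Real.sin ((d * (1 + 1 / s) + s - 1) / 2) ≤ 1 := Real.sin_le_one _
  calc 1 + d / s + 2 * Real.sin ((d * (1 + 1 / s) + s - 1) / 2)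
      ≤ 1 + (s * (Real.pi - s + 1) / (s + 1)) / s + 2 * 1 := by nlinarith
    _ = (2 * s + Real.pi + 4) / (s + 1) := by field_simp; ring
end

section
/- For every real s ∈ [1, 2], both 1 + √(2 − 2·cos(s − 1)) ≤ 1 + 2·√(1 − 1/(s+1)²) + (2·arccos(−1/(s+1)) − s + 1)/(s + 1) and (2s + π + 4)/(s + 1) ≤ 1 + 2·√(1 − 1/(s+1)²) + (2·arccos(−1/(s+1)) − s + 1)/(s + 1). (Hence the overall worst-case evacuation time of the Both-to-the-Same-Point strategy for s ∈ [1, 2] is BSP(s) = 1 + 2·√(1 − 1/(s+1)²) + (2·arccos(−1/(s+1)) − s + 1)/(s + 1).) -/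
open Real

/-- For `s ∈ [1,2]`, both case bounds of the BSP strategy are dominated by
`BSP(s) = 1 + 2·√(1 − 1/(s+1)²) + (2·arccos(−1/(s+1)) − s + 1)/(s + 1)`. -/
theorem bsp_dominant_case (s : ℝ) (hs : s ∈ Set.Icc (1 : ℝ) 2) :
    1 + Real.sqrt (2 - 2 * Real.cos (s - 1)) ≤
      1 + 2 * Real.sqrt (1 - 1 / (s + 1) ^ 2) +
        (2 * Real.arccos (-1 / (s + 1)) - s + 1) / (s + 1) ∧
    (2 * s + Real.pi + 4) / (s + 1) ≤
      1 + 2 * Real.sqrt (1 - 1 / (s + 1) ^ 2) +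
        (2 * Real.arccos (-1 / (s + 1)) - s + 1) / (s + 1) := by
  obtain ⟨h1, h2⟩ := hs
  have ht2 : (2:ℝ) ≤ s + 1 := by linarith
  have htpos : (0:ℝ) < s + 1 := by linarith
  set x : ℝ := 1 / (s + 1) with hxdef
  have hx0 : 0 < x := by positivity
  have hx1 : x ≤ 1 / 2 := by
    rw [hxdef, div_le_div_iff₀ htpos (by norm_num)]; linarith
  -- arccos(-x) = π/2 + arcsin x
  have harc : Real.arccos (-x) = π / 2 + Real.arcsin x := by
    rw [show (-x) = -(x) by ring, Real.arccos_neg,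
      Real.arccos_eq_pi_div_two_sub_arcsin]; ring
  -- arcsin x ≥ x
  have harcsin : x ≤ Real.arcsin x := by
    have h := Real.sin_le (Real.arcsin_nonneg.2 hx0.le)
    rwa [Real.sin_arcsin (by linarith) (by linarith)] at h
  -- sqrt bound : 1 - x^2 ≤ sqrt (1 - x^2)
  have hu0 : 0 ≤ 1 - x ^ 2 := by nlinarith
  have hsq : (Real.sqrt (1 - x ^ 2)) ^ 2 = 1 - x ^ 2 := Real.sq_sqrt hu0
  have hsnn : 0 ≤ Real.sqrt (1 - x ^ 2) := Real.sqrt_nonneg _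
  have hsqle : 1 - x ^ 2 ≤ Real.sqrt (1 - x ^ 2) := by nlinarith
  have hx2 : 1 / (s + 1) ^ 2 = x ^ 2 := by
    rw [hxdef]; field_simp
  have hxx : x * (s + 1) = 1 := by
    rw [hxdef]; field_simp
  have hpi : (3.14159 : ℝ) ≤ π := by
    have := Real.pi_gt_d6; linarith
  constructor
  · -- LHS ≤ 1 + √2 ≤ 1 + √3 ≤ RHS
    have hcos : 0 ≤ Real.cos (s - 1) := by
      apply Real.cos_nonneg_of_mem_Icc
      constructor <;> [linarith [Real.pi_gt_d6]; linarith [Real.pi_gt_d6]]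
    have hL : Real.sqrt (2 - 2 * Real.cos (s - 1)) ≤ Real.sqrt 2 := by
      apply Real.sqrt_le_sqrt; linarith
    have hs2 : Real.sqrt 2 ≤ 1.5 := by
      rw [show (1.5:ℝ) = Real.sqrt (1.5^2) by rw [Real.sqrt_sq]; norm_num]
      apply Real.sqrt_le_sqrt; norm_num
    -- sqrt(1-x^2) ≥ sqrt(3/4)
    have hs3 : Real.sqrt (3/4) ≤ Real.sqrt (1 - x ^ 2) := by
      apply Real.sqrt_le_sqrt; nlinarith
    have hs4 : (0.86 : ℝ) ≤ Real.sqrt (3/4) := by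
      rw [show (0.86:ℝ) = Real.sqrt (0.86^2) by rw [Real.sqrt_sq]; norm_num]
      apply Real.sqrt_le_sqrt; norm_num
    have hnum : 0 ≤ (2 * Real.arccos (-x) - s + 1) / (s + 1) := by
      apply div_nonneg _ htpos.le
      rw [harc]
      have := Real.arcsin_nonneg.2 hx0.le
      linarith
    rw [hx2]
    have : -1 / (s+1) = -x := by rw [hxdef]; ring
    rw [this]
    linarith
  · rw [hx2, show -1 / (s+1) = -x by rw [hxdef]; ring, harc,
      div_le_iff₀ htpos]
    have hcan : (2 * (π / 2 + Real.arcsin x) - s + 1) / (s + 1) * (s + 1)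
        = 2 * (π / 2 + Real.arcsin x) - s + 1 := div_mul_cancel₀ _ htpos.ne'
    have key : (s + 1) * Real.sqrt (1 - x ^ 2) ≥ (s + 1) - x := by
      have : (s + 1) * (1 - x ^ 2) = (s + 1) - x := by
        nlinarith [hxx]
      nlinarith [hsqle]
    nlinarith [harcsin, key, hcan]
end

section
/- For every real s ≥ 2, the value (1 + 2·arccos(−2/s))/s + √(1 − 4/s²) is the greatest value of the function h(a) = (1 + a)/s + sin(a/2) over a ∈ [π, 2π]; that is, h(a) ≤ (1 + 2·arccos(−2/s))/s + √(1 − 4/s²) for all a ∈ [π, 2π], with equality at a = 2·arccos(−2/s). (This is the lower bound on the evacuation time of any fast-explores strategy for s ≥ 2.) -/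
open Real

/-- FES lower bound for `s ≥ 2`: `(1 + 2·arccos(−2/s))/s + √(1 − 4/s²)` is the greatest
value of `h(a) = (1 + a)/s + sin(a/2)` over `a ∈ [π, 2π]`, with equality at
`a = 2·arccos(−2/s)`. -/
theorem fes_lower_bound_max (s : ℝ) (hs : 2 ≤ s) :
    (∀ a ∈ Set.Icc Real.pi (2 * Real.pi),
      (1 + a) / s + Real.sin (a / 2) ≤
        (1 + 2 * Real.arccos (-2 / s)) / s + Real.sqrt (1 - 4 / s ^ 2)) ∧
    (1 + 2 * Real.arccos (-2 / s)) / s + Real.sin (2 * Real.arccos (-2 / s) / 2) =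
      (1 + 2 * Real.arccos (-2 / s)) / s + Real.sqrt (1 - 4 / s ^ 2) := by
  have hs0 : (0:ℝ) < s := lt_of_lt_of_le (by norm_num) hs
  have hx1 : (-1:ℝ) ≤ -2 / s := by
    rw [neg_div, neg_le_neg_iff]
    rw [div_le_one hs0]; exact hs
  have hx2 : -2 / s ≤ 1 := by
    have : -2 / s ≤ 0 := by
      rw [neg_div]; exact neg_nonpos.2 (div_nonneg (by norm_num) hs0.le)
    linarith
  have hxneg : -2 / s ≤ 0 := by
    rw [neg_div]; exact neg_nonpos.2 (div_nonneg (by norm_num) hs0.le)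
  set x₀ := Real.arccos (-2 / s) with hx₀
  have hcos : Real.cos x₀ = -2 / s := Real.cos_arccos hx1 hx2
  have hx₀lo : Real.pi / 2 ≤ x₀ := by
    rw [hx₀, Real.arccos_eq_pi_div_two_sub_arcsin]
    have := Real.arcsin_nonpos.2 hxneg
    linarith
  have hx₀hi : x₀ ≤ Real.pi := Real.arccos_le_pi _
  have hsin : Real.sin x₀ = Real.sqrt (1 - 4 / s ^ 2) := by
    rw [hx₀, Real.sin_arccos]
    congr 1; ring
  set f : ℝ → ℝ := fun a => (1 + a) / s + Real.sin (a / 2) with hf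
  have hderiv : ∀ x : ℝ, HasDerivAt f (1 / s + Real.cos (x / 2) * (1 / 2)) x := by
    intro x
    have h1 : HasDerivAt (fun a : ℝ => (1 + a) / s) (1 / s) x := by
      simpa using ((hasDerivAt_id x).const_add 1).div_const s
    have h2 : HasDerivAt (fun a : ℝ => Real.sin (a / 2)) (Real.cos (x / 2) * (1 / 2)) x := by
      simpa using ((hasDerivAt_id x).div_const 2).sin
    exact h1.add h2
  have hcont : Continuous f := by fun_prop
  have hdiff : ∀ x : ℝ, DifferentiableAt ℝ f x := fun x => (hderiv x).differentiableAt
  have hd : ∀ x : ℝ, deriv f x = 1 / s + Real.cos (x / 2) * (1 / 2) := fun x =>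
    (hderiv x).deriv
  have hmono : MonotoneOn f (Set.Icc Real.pi (2 * x₀)) := by
    apply monotoneOn_of_deriv_nonneg (convex_Icc _ _) hcont.continuousOn
      (fun x _ => (hdiff x).differentiableWithinAt)
    intro x hx
    rw [interior_Icc] at hx
    rw [hd]
    have h1 : Real.cos x₀ ≤ Real.cos (x / 2) :=
      Real.cos_le_cos_of_nonneg_of_le_pi (by linarith [Real.pi_pos, hx.1]) hx₀hi (by linarith [hx.2])
    rw [hcos] at h1
    have : 0 ≤ 1 / s + (-2 / s) * (1 / 2) := by
      rw [neg_div]; ring_nf; positivity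
    nlinarith
  have hanti : AntitoneOn f (Set.Icc (2 * x₀) (2 * Real.pi)) := by
    apply antitoneOn_of_deriv_nonpos (convex_Icc _ _) hcont.continuousOn
      (fun x _ => (hdiff x).differentiableWithinAt)
    intro x hx
    rw [interior_Icc] at hx
    rw [hd]
    have h1 : Real.cos (x / 2) ≤ Real.cos x₀ :=
      Real.cos_le_cos_of_nonneg_of_le_pi (by linarith [Real.pi_pos, hx.1, hx₀lo]) (by linarith [hx.2])
        (by linarith [hx.1])
    rw [hcos] at h1
    have : (1 : ℝ) / s + (-2 / s) * (1 / 2) = 0 := by field_simp; ring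
    nlinarith
  have hpi : 0 < Real.pi := Real.pi_pos
  have key : (1 + 2 * x₀) / s + Real.sin (2 * x₀ / 2) =
      (1 + 2 * x₀) / s + Real.sqrt (1 - 4 / s ^ 2) := by
    have h2 : 2 * x₀ / 2 = x₀ := by ring
    rw [h2, hsin]
  constructor
  · intro a ha
    have hfa₀ : f (2 * x₀) = (1 + 2 * x₀) / s + Real.sqrt (1 - 4 / s ^ 2) := by
      rw [hf]; simpa using key
    have : f a ≤ f (2 * x₀) := by
      rcases le_total a (2 * x₀) with h | h
      · exact hmono ⟨ha.1, h⟩ ⟨by linarith, le_refl _⟩ h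
      · exact hanti ⟨le_refl _, by linarith⟩ ⟨h, ha.2⟩ h
    rw [hfa₀] at this
    exact this
  · exact key
end

section
/- For every real s with 1 ≤ s < 2, the value 1 + (2/s)·√(1 − s²/(s+1)²) + (2·arccos(−s/(s+1)) − s + 1)/(s + 1) is the greatest value of the function F(y) = 1 + y + (2/s)·sin((s + (s+1)·y − 1)/2) over y ∈ [(π − s + 1)/(s + 1), (2π − s + 1)/(s + 1)]; the maximum is attained at y = (2·arccos(−s/(s+1)) − s + 1)/(s + 1). (This is the both-explore lower bound on evacuation time for s ∈ [1, 2).) -/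
open Real

/-- BES lower bound for `1 ≤ s < 2`:
`1 + (2/s)·√(1 − s²/(s+1)²) + (2·arccos(−s/(s+1)) − s + 1)/(s + 1)` is the greatest value of
`F(y) = 1 + y + (2/s)·sin((s + (s+1)·y − 1)/2)` over
`y ∈ [(π − s + 1)/(s + 1), (2π − s + 1)/(s + 1)]`, attained at
`y = (2·arccos(−s/(s+1)) − s + 1)/(s + 1)`. -/
theorem bes_lower_bound_small_s (s : ℝ) (hs1 : 1 ≤ s) (hs2 : s < 2) :
    (∀ y ∈ Set.Icc ((Real.pi - s + 1) / (s + 1)) ((2 * Real.pi - s + 1) / (s + 1)),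
      1 + y + (2 / s) * Real.sin ((s + (s + 1) * y - 1) / 2) ≤
        1 + (2 / s) * Real.sqrt (1 - s ^ 2 / (s + 1) ^ 2) +
          (2 * Real.arccos (-s / (s + 1)) - s + 1) / (s + 1)) ∧
    (2 * Real.arccos (-s / (s + 1)) - s + 1) / (s + 1) ∈
      Set.Icc ((Real.pi - s + 1) / (s + 1)) ((2 * Real.pi - s + 1) / (s + 1)) ∧
    1 + (2 * Real.arccos (-s / (s + 1)) - s + 1) / (s + 1) +
        (2 / s) *
          Real.sin ((s + (s + 1) * ((2 * Real.arccos (-s / (s + 1)) - s + 1) / (s + 1)) - 1) / 2) =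
      1 + (2 / s) * Real.sqrt (1 - s ^ 2 / (s + 1) ^ 2) +
        (2 * Real.arccos (-s / (s + 1)) - s + 1) / (s + 1) := by
  have hs0 : (0:ℝ) < s := by linarith
  have hsp : (0:ℝ) < s + 1 := by linarith
  set x : ℝ := -s / (s + 1) with hxdef
  have hx1 : (-1:ℝ) ≤ x := by
    rw [hxdef, neg_div, neg_le_neg_iff, div_le_one hsp]; linarith
  have hx0 : x ≤ 0 := by
    rw [hxdef]
    exact div_nonpos_of_nonpos_of_nonneg (by linarith) hsp.le
  set θ : ℝ := Real.arccos x with hθdef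
  have hcosθ : Real.cos θ = x := Real.cos_arccos hx1 (by linarith)
  have hθ2 : Real.pi / 2 ≤ θ := by
    rw [hθdef, Real.arccos_eq_pi_div_two_sub_arcsin]
    have := Real.arcsin_nonpos.2 hx0
    linarith
  have hθπ : θ ≤ Real.pi := Real.arccos_le_pi x
  have hsin : Real.sqrt (1 - s ^ 2 / (s + 1) ^ 2) = Real.sin θ := by
    rw [hθdef, Real.sin_arccos, hxdef]
    congr 1
    rw [div_pow, neg_pow]
    ring
  -- the auxiliary function
  set G : ℝ → ℝ := fun t => t / (s + 1) + Real.sin t / s with hGdef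
  have hGderiv : ∀ t : ℝ, HasDerivAt G (1 / (s + 1) + Real.cos t / s) t := by
    intro t
    exact ((hasDerivAt_id t).div_const (s + 1)).add ((Real.hasDerivAt_sin t).div_const s)
  have hGmax : ∀ t ∈ Set.Icc (Real.pi / 2) Real.pi, G t ≤ G θ := by
    intro t ht
    rcases le_total t θ with hle | hle
    · -- monotone on [π/2, θ]
      have hmono : MonotoneOn G (Set.Icc (Real.pi / 2) θ) := by
        apply monotoneOn_of_deriv_nonneg (convex_Icc _ _)
        · exact fun u _ => ((hGderiv u).continuousAt).continuousWithinAt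
        · exact fun u _ => ((hGderiv u).differentiableAt).differentiableWithinAt
        · intro u hu
          rw [interior_Icc] at hu
          rw [(hGderiv u).deriv]
          have hcos : Real.cos θ ≤ Real.cos u :=
            Real.cos_le_cos_of_nonneg_of_le_pi (by linarith [Real.pi_pos, hu.1]) hθπ hu.2.le
          have hcu : -s ≤ Real.cos u * (s + 1) :=
            (div_le_iff₀ hsp).mp (hcosθ ▸ hcos : x ≤ Real.cos u)
          have key : 1 / (s + 1) + Real.cos u / s = (s + Real.cos u * (s + 1)) / ((s + 1) * s) := by
            field_simp
          rw [key]
          apply div_nonneg (by linarith) (by positivity)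
      exact hmono ⟨ht.1, hle⟩ ⟨hθ2, le_refl θ⟩ hle
    · have hanti : AntitoneOn G (Set.Icc θ Real.pi) := by
        apply antitoneOn_of_deriv_nonpos (convex_Icc _ _)
        · exact fun u _ => ((hGderiv u).continuousAt).continuousWithinAt
        · exact fun u _ => ((hGderiv u).differentiableAt).differentiableWithinAt
        · intro u hu
          rw [interior_Icc] at hu
          rw [(hGderiv u).deriv]
          have hcos : Real.cos u ≤ Real.cos θ :=
            Real.cos_le_cos_of_nonneg_of_le_pi (by linarith [Real.pi_pos, hθ2]) hu.2.le hu.1.le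
          have hcu : Real.cos u * (s + 1) ≤ -s :=
            (le_div_iff₀ hsp).mp (hcosθ ▸ hcos : Real.cos u ≤ x)
          have key : 1 / (s + 1) + Real.cos u / s = (s + Real.cos u * (s + 1)) / ((s + 1) * s) := by
            field_simp
          rw [key]
          apply div_nonpos_of_nonpos_of_nonneg (by linarith) (by positivity)
      exact hanti ⟨le_refl θ, hθπ⟩ ⟨hle, ht.2⟩ hle
  have hsne : s ≠ 0 := ne_of_gt hs0
  have hspne : s + 1 ≠ 0 := ne_of_gt hsp
  refine ⟨?_, ⟨?_, ?_⟩, ?_⟩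
  · intro y hy
    set t : ℝ := (s + (s + 1) * y - 1) / 2 with htdef
    have hy1 : Real.pi - s + 1 ≤ y * (s + 1) := (div_le_iff₀ hsp).mp hy.1
    have hy2 : y * (s + 1) ≤ 2 * Real.pi - s + 1 := (le_div_iff₀ hsp).mp hy.2
    have htmem : t ∈ Set.Icc (Real.pi / 2) Real.pi := by
      constructor
      · rw [htdef]; rw [le_div_iff₀ (by norm_num : (0:ℝ) < 2)]; nlinarith
      · rw [htdef]; rw [div_le_iff₀ (by norm_num : (0:ℝ) < 2)]; nlinarith
    have hG := hGmax t htmem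
    rw [hGdef] at hG
    simp only at hG
    have hyeq : y = 2 * (t / (s + 1)) + (1 - s) / (s + 1) := by
      rw [htdef]; field_simp; ring
    have hyeq' : (2 * θ - s + 1) / (s + 1) = 2 * (θ / (s + 1)) + (1 - s) / (s + 1) := by
      ring
    have e1 : (2 / s) * Real.sin t = 2 * (Real.sin t / s) := by ring
    have e2 : (2 / s) * Real.sin θ = 2 * (Real.sin θ / s) := by ring
    rw [hsin, hyeq']
    linarith [hG]
  · rw [div_le_div_iff₀ hsp hsp]
    nlinarith [hθ2]
  · rw [div_le_div_iff₀ hsp hsp]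
    nlinarith [hθπ]
  · have harg : (s + (s + 1) * ((2 * Real.arccos (-s / (s + 1)) - s + 1) / (s + 1)) - 1) / 2 = θ := by
      rw [hθdef, hxdef]; field_simp; ring
    rw [harg, hsin]
    ring
end

section
/- Let s ≥ 2 be real and suppose (s − 1)/2 ≤ arccos(−2/(s+1)). Then the value 1 + √(1 − 4/(s+1)²) + (2·arccos(−2/(s+1)) − s + 1)/(s + 1) is the greatest value of the function G(y) = 1 + y + sin((s + (s+1)·y − 1)/2) over y ∈ [max{0, (π − s + 1)/(s + 1)}, (2π − s + 1)/(s + 1)]; the maximum is attained at y = (2·arccos(−2/(s+1)) − s + 1)/(s + 1). (This is the both-explore lower bound on evacuation time for s ∈ [2, c₄.₈₄], where c₄.₈₄ ≈ 4.8406 is the speed at which (s−1)/2 = arccos(−2/(s+1)).) -/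
open Real

lemma sin_tangent_line {a t : ℝ} (ha : a ∈ Set.Icc 0 Real.pi)
    (ht : t ∈ Set.Icc 0 Real.pi) :
    Real.sin t ≤ Real.sin a + Real.cos a * (t - a) := by
  set g : ℝ → ℝ := fun x => Real.sin a + Real.cos a * (x - a) - Real.sin x with hg
  have hderiv : ∀ x : ℝ, HasDerivAt g (Real.cos a - Real.cos x) x := by
    intro x
    have h1 : HasDerivAt (fun x : ℝ => Real.sin a + Real.cos a * (x - a)) (Real.cos a) x := by
      simpa using (((hasDerivAt_id x).sub_const a).const_mul (Real.cos a)).const_add (Real.sin a)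
    exact h1.sub (Real.hasDerivAt_sin x)
  have hga : g a = 0 := by simp [hg]
  have key : 0 ≤ g t := by
    rcases le_total t a with h | h
    · have hanti : AntitoneOn g (Set.Icc 0 a) := by
        apply antitoneOn_of_deriv_nonpos (convex_Icc 0 a)
        · exact fun x _ => ((hderiv x).continuousAt).continuousWithinAt
        · intro x hx
          exact ((hderiv x).differentiableAt).differentiableWithinAt
        · intro x hx
          rw [interior_Icc] at hx
          rw [(hderiv x).deriv]
          have : Real.cos a ≤ Real.cos x :=
            Real.cos_le_cos_of_nonneg_of_le_pi hx.1.le ha.2 hx.2.le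
          linarith
      have h2 := hanti ⟨ht.1, h⟩ ⟨ha.1, le_refl a⟩ h
      rw [hga] at h2; exact h2
    · have hmono : MonotoneOn g (Set.Icc a Real.pi) := by
        apply monotoneOn_of_deriv_nonneg (convex_Icc a Real.pi)
        · exact fun x _ => ((hderiv x).continuousAt).continuousWithinAt
        · intro x hx
          exact ((hderiv x).differentiableAt).differentiableWithinAt
        · intro x hx
          rw [interior_Icc] at hx
          rw [(hderiv x).deriv]
          have : Real.cos x ≤ Real.cos a :=
            Real.cos_le_cos_of_nonneg_of_le_pi ha.1 hx.2.le hx.1.le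
          linarith
      have h2 := hmono ⟨le_refl a, ha.2⟩ ⟨h, ht.2⟩ h
      rw [hga] at h2; exact h2
  simp only [hg] at key
  linarith

/-- BES lower bound for `s ∈ [2, c₄.₈₄]`: under `(s − 1)/2 ≤ arccos(−2/(s+1))`, the value
`1 + √(1 − 4/(s+1)²) + (2·arccos(−2/(s+1)) − s + 1)/(s + 1)` is the greatest value of
`G(y) = 1 + y + sin((s + (s+1)·y − 1)/2)` over
`y ∈ [max 0 ((π − s + 1)/(s + 1)), (2π − s + 1)/(s + 1)]`, attained at
`y = (2·arccos(−2/(s+1)) − s + 1)/(s + 1)`. -/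
theorem bes_lower_bound_mid_s (s : ℝ) (hs : 2 ≤ s)
    (hc : (s - 1) / 2 ≤ Real.arccos (-2 / (s + 1))) :
    (∀ y ∈ Set.Icc (max 0 ((Real.pi - s + 1) / (s + 1))) ((2 * Real.pi - s + 1) / (s + 1)),
      1 + y + Real.sin ((s + (s + 1) * y - 1) / 2) ≤
        1 + Real.sqrt (1 - 4 / (s + 1) ^ 2) +
          (2 * Real.arccos (-2 / (s + 1)) - s + 1) / (s + 1)) ∧
    (2 * Real.arccos (-2 / (s + 1)) - s + 1) / (s + 1) ∈
      Set.Icc (max 0 ((Real.pi - s + 1) / (s + 1))) ((2 * Real.pi - s + 1) / (s + 1)) ∧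
    1 + (2 * Real.arccos (-2 / (s + 1)) - s + 1) / (s + 1) +
        Real.sin ((s + (s + 1) * ((2 * Real.arccos (-2 / (s + 1)) - s + 1) / (s + 1)) - 1) / 2) =
      1 + Real.sqrt (1 - 4 / (s + 1) ^ 2) +
        (2 * Real.arccos (-2 / (s + 1)) - s + 1) / (s + 1) := by
  have hcpos : (0 : ℝ) < s + 1 := by linarith
  have hcne : (s + 1 : ℝ) ≠ 0 := ne_of_gt hcpos
  set A := Real.arccos (-2 / (s + 1)) with hA
  have hApos : 0 ≤ A := Real.arccos_nonneg _
  have hApi : A ≤ Real.pi := Real.arccos_le_pi _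
  have hxle : -2 / (s + 1) ≤ 0 :=
    div_nonpos_of_nonpos_of_nonneg (by norm_num) hcpos.le
  have hAhalf : Real.pi / 2 ≤ A := by
    rw [hA, Real.arccos_eq_pi_div_two_sub_arcsin]
    have := Real.arcsin_nonpos.mpr hxle
    linarith
  have hxge : (-1 : ℝ) ≤ -2 / (s + 1) := by
    rw [neg_div, neg_le_neg_iff, div_le_one hcpos]; linarith
  have hcosA : Real.cos A = -2 / (s + 1) :=
    Real.cos_arccos hxge (hxle.trans zero_le_one)
  have hsinA : Real.sin A = Real.sqrt (1 - 4 / (s + 1) ^ 2) := by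
    rw [hA, Real.sin_arccos]
    congr 1
    rw [neg_div, neg_sq, div_pow]
    norm_num
  -- the maximizer
  have hystar : (s + 1) * ((2 * A - s + 1) / (s + 1)) = 2 * A - s + 1 :=
    mul_div_cancel₀ _ hcne
  have hargA : (s + (s + 1) * ((2 * A - s + 1) / (s + 1)) - 1) / 2 = A := by
    rw [hystar]; ring
  refine ⟨?_, ⟨?_, ?_⟩, ?_⟩
  · intro y hy
    obtain ⟨hy1, hy2⟩ := hy
    have hy1' : (Real.pi - s + 1) / (s + 1) ≤ y := le_trans (le_max_right _ _) hy1
    have hylb : Real.pi - s + 1 ≤ (s + 1) * y := by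
      rw [div_le_iff₀ hcpos] at hy1'; linarith [hy1']
    have hyub : (s + 1) * y ≤ 2 * Real.pi - s + 1 := by
      rw [le_div_iff₀ hcpos] at hy2; linarith [hy2]
    set t := (s + (s + 1) * y - 1) / 2 with ht
    have htmem : t ∈ Set.Icc 0 Real.pi := by
      constructor
      · rw [ht]; have := Real.pi_pos; linarith
      · rw [ht]; linarith [hyub]
    have hkey := sin_tangent_line (a := A) (t := t) ⟨hApos, hApi⟩ htmem
    rw [hcosA] at hkey
    have hlin : y + (-2 / (s + 1)) * (t - A) = (2 * A - s + 1) / (s + 1) := by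
      rw [ht]; field_simp; ring
    rw [← hsinA]
    have : 1 + y + Real.sin t ≤ 1 + y + (Real.sin A + -2 / (s + 1) * (t - A)) := by
      linarith
    calc 1 + y + Real.sin t ≤ 1 + Real.sin A + (y + (-2 / (s + 1)) * (t - A)) := by linarith
      _ = 1 + Real.sin A + (2 * A - s + 1) / (s + 1) := by rw [hlin]
  · apply max_le
    · apply div_nonneg _ hcpos.le
      linarith [hc]
    · gcongr <;> linarith [hAhalf]
  · gcongr <;> linarith [hApi]
  · rw [hargA, hsinA]; ring
end

section
/- Let s be real with π + 1 ≤ s ≤ 2π + 1 and suppose arccos(−2/(s+1)) ≤ (s − 1)/2. Then for all y ∈ [0, (2π − s + 1)/(s + 1)], 1 + y + sin((s + (s+1)·y − 1)/2) ≤ 1 + sin((s − 1)/2), with equality at y = 0. (This is the both-explore lower bound on evacuation time for s ∈ (c₄.₈₄, 2π + 1), where c₄.₈₄ ≈ 4.8406 is the speed at which (s−1)/2 = arccos(−2/(s+1)).) -/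
open Real

/-- BES lower bound for `s ∈ (c₄.₈₄, 2π + 1)`: if `π + 1 ≤ s ≤ 2π + 1` and
`arccos(−2/(s+1)) ≤ (s − 1)/2`, then for all `y ∈ [0, (2π − s + 1)/(s + 1)]`,
`1 + y + sin((s + (s+1)·y − 1)/2) ≤ 1 + sin((s − 1)/2)`, with equality at `y = 0`. -/
theorem bes_lower_bound_large_s (s : ℝ) (hs1 : Real.pi + 1 ≤ s) (hs2 : s ≤ 2 * Real.pi + 1)
    (hc : Real.arccos (-2 / (s + 1)) ≤ (s - 1) / 2) :
    (∀ y ∈ Set.Icc (0 : ℝ) ((2 * Real.pi - s + 1) / (s + 1)),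
      1 + y + Real.sin ((s + (s + 1) * y - 1) / 2) ≤ 1 + Real.sin ((s - 1) / 2)) ∧
    1 + (0 : ℝ) + Real.sin ((s + (s + 1) * 0 - 1) / 2) = 1 + Real.sin ((s - 1) / 2) := by
  have hpi := Real.pi_pos
  have hsp : (0 : ℝ) < s + 1 := by nlinarith
  set B := (2 * Real.pi - s + 1) / (s + 1) with hB
  have hB0 : 0 ≤ B := by
    apply div_nonneg _ hsp.le
    nlinarith
  set f : ℝ → ℝ := fun y => 1 + y + Real.sin ((s + (s + 1) * y - 1) / 2) with hf
  have hderiv : ∀ y : ℝ, HasDerivAt f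
      (1 + Real.cos ((s + (s + 1) * y - 1) / 2) * ((s + 1) / 2)) y := by
    intro y
    have hg : HasDerivAt (fun y => (s + (s + 1) * y - 1) / 2) ((s + 1) / 2) y := by
      have h := (((((hasDerivAt_id y).const_mul (s + 1)).const_add s)).sub_const 1).div_const 2
      simpa using h
    have hsin : HasDerivAt (fun y => Real.sin ((s + (s + 1) * y - 1) / 2))
        (Real.cos ((s + (s + 1) * y - 1) / 2) * ((s + 1) / 2)) y :=
      (Real.hasDerivAt_sin _).comp y hg
    have h1 : HasDerivAt (fun y : ℝ => 1 + y) 1 y :=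
      (hasDerivAt_id y).const_add 1
    simpa [f, Pi.add_def] using h1.add hsin
  have hdnonpos : ∀ x ∈ Set.Icc (0 : ℝ) B,
      1 + Real.cos ((s + (s + 1) * x - 1) / 2) * ((s + 1) / 2) ≤ 0 := by
    intro x hx
    obtain ⟨hx0, hxB⟩ := hx
    set a := (s + (s + 1) * x - 1) / 2 with ha
    have ha1 : arccos (-2 / (s + 1)) ≤ a := by
      have : (s - 1) / 2 ≤ a := by
        rw [ha]; nlinarith
      linarith
    have ha2 : a ≤ Real.pi := by
      have : (s + 1) * x ≤ 2 * Real.pi - s + 1 := by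
        rw [hB] at hxB
        calc (s + 1) * x ≤ (s + 1) * ((2 * Real.pi - s + 1) / (s + 1)) := by
              exact mul_le_mul_of_nonneg_left hxB hsp.le
          _ = 2 * Real.pi - s + 1 := by field_simp
      rw [ha]; linarith
    have hval : (-1 : ℝ) ≤ -2 / (s + 1) := by
      have h2 : 2 / (s + 1) ≤ 1 := by rw [div_le_one hsp]; nlinarith
      rw [neg_div]; linarith
    have hval2 : -2 / (s + 1) ≤ 1 := by
      have : -2 / (s + 1) ≤ 0 := div_nonpos_of_nonpos_of_nonneg (by norm_num) hsp.le
      linarith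
    have hcos : Real.cos a ≤ -2 / (s + 1) := by
      have := Real.cos_le_cos_of_nonneg_of_le_pi (Real.arccos_nonneg _) ha2 ha1
      rwa [Real.cos_arccos hval hval2] at this
    have : Real.cos a * ((s + 1) / 2) ≤ (-2 / (s + 1)) * ((s + 1) / 2) :=
      mul_le_mul_of_nonneg_right hcos (by positivity)
    have heq : (-2 / (s + 1)) * ((s + 1) / 2) = -1 := by field_simp
    linarith [heq ▸ this]
  have hanti : AntitoneOn f (Set.Icc (0 : ℝ) B) := by
    apply antitoneOn_of_deriv_nonpos (convex_Icc 0 B)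
    · exact fun x _ => ((hderiv x).continuousAt).continuousWithinAt
    · intro x hx
      exact ((hderiv x).differentiableAt).differentiableWithinAt
    · intro x hx
      rw [(hderiv x).deriv]
      exact hdnonpos x (interior_subset hx)
  have h0 : f 0 = 1 + Real.sin ((s - 1) / 2) := by
    simp only [f]
    norm_num
  constructor
  · intro y hy
    have := hanti (Set.left_mem_Icc.mpr hB0) hy hy.1
    rw [h0] at this
    simpa [f] using this
  · norm_num
end

section
/- Let s be real with π + 1 ≤ s and s − 1 ≤ 2·arccos(−2/s). Then the value 1 + sin((s − 1)/2) is the greatest value of the function h(a) = (1 + a)/s + sin(a/2) over a ∈ [π, s − 1]; the maximum is attained at a = s − 1. (This gives the both-explore lower bound 1 + sin((s−1)/2) for s ∈ (π + 1, c₄.₉₇], where c₄.₉₇ ≈ 4.9699 is the speed at which s − 1 = 2·arccos(−2/s), obtained by considering the moment before the slow robot has reached the boundary.) -/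
open Real

/-- BES (antipodal) lower bound for `s ∈ (π + 1, c₄.₉₇]`: if `π + 1 ≤ s` and
`s − 1 ≤ 2·arccos(−2/s)`, then `1 + sin((s − 1)/2)` is the greatest value of
`h(a) = (1 + a)/s + sin(a/2)` over `a ∈ [π, s − 1]`, attained at `a = s − 1`. -/
theorem bes_antipodal_small (s : ℝ) (hs : Real.pi + 1 ≤ s)
    (hc : s - 1 ≤ 2 * Real.arccos (-2 / s)) :
    (∀ a ∈ Set.Icc Real.pi (s - 1),
      (1 + a) / s + Real.sin (a / 2) ≤ 1 + Real.sin ((s - 1) / 2)) ∧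
    (s - 1) ∈ Set.Icc Real.pi (s - 1) ∧
    (1 + (s - 1)) / s + Real.sin ((s - 1) / 2) = 1 + Real.sin ((s - 1) / 2) := by
  have hπ : (0:ℝ) < Real.pi := Real.pi_pos
  have hs0 : (0:ℝ) < s := by linarith
  have hmem : (s - 1) ∈ Set.Icc Real.pi (s - 1) := ⟨by linarith, le_refl _⟩
  have hlast : (1 + (s - 1)) / s + Real.sin ((s - 1) / 2)
      = 1 + Real.sin ((s - 1) / 2) := by
    have : (1 + (s - 1)) / s = 1 := by field_simp; ring
    rw [this]
  have hmono : MonotoneOn (fun a => (1 + a) / s + Real.sin (a / 2))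
      (Set.Icc Real.pi (s - 1)) := by
    apply monotoneOn_of_deriv_nonneg (convex_Icc _ _)
    · exact Continuous.continuousOn (by continuity)
    · intro x hx
      apply DifferentiableAt.differentiableWithinAt
      fun_prop
    · intro x hx
      rw [interior_Icc] at hx
      have hd : HasDerivAt (fun a => (1 + a) / s + Real.sin (a / 2))
          (1 / s + Real.cos (x / 2) * (1 / 2)) x := by
        have h1 : HasDerivAt (fun a : ℝ => (1 + a) / s) (1 / s) x := by
          simpa using ((hasDerivAt_id x).const_add 1).div_const s
        have h2 : HasDerivAt (fun a : ℝ => Real.sin (a / 2))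
            (Real.cos (x / 2) * (1 / 2)) x := by
          simpa using ((hasDerivAt_id x).div_const 2).sin
        exact h1.add h2
      rw [hd.deriv]
      have hb1 : (-1 : ℝ) ≤ -2 / s := by
        rw [le_div_iff₀ hs0]; nlinarith [Real.pi_gt_three]
      have hb2 : (-2 : ℝ) / s ≤ 1 := by
        rw [div_le_iff₀ hs0]; linarith
      have hcos : -2 / s ≤ Real.cos (x / 2) := by
        have hx2 : x / 2 ≤ Real.arccos (-2 / s) := by linarith [hx.2]
        have := Real.cos_le_cos_of_nonneg_of_le_pi (by linarith [hx.1] : 0 ≤ x / 2)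
          (Real.arccos_le_pi (-2 / s)) hx2
        rwa [Real.cos_arccos hb1 hb2] at this
      have h0 : 1 / s + (-2 / s) * (1 / 2) = 0 := by ring
      nlinarith
  refine ⟨fun a ha => ?_, hmem, hlast⟩
  have h := hmono ha hmem ha.2
  simp only at h
  rw [hlast] at h
  exact h
end

section
/- Let s be real with π + 1 < s and 2·arccos(−2/s) ≤ s − 1. Then the value (1 + 2·arccos(−2/s))/s + √(1 − 4/s²) is the greatest value of the function h(a) = (1 + a)/s + sin(a/2) over a ∈ [π, min{s − 1, 2π}]; the maximum is attained at a = 2·arccos(−2/s). (This gives the both-explore lower bound for s ≥ c₄.₉₇, where c₄.₉₇ ≈ 4.9699 is the speed at which s − 1 = 2·arccos(−2/s).) -/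
open Real

/-- Tangent line inequality for sin, concave on [0, π]. -/
lemma sin_tangent_le {x t : ℝ} (hx : x ∈ Set.Icc 0 Real.pi) (ht : t ∈ Set.Icc 0 Real.pi) :
    Real.sin x ≤ Real.sin t + (x - t) * Real.cos t := by
  have hconv : ConvexOn ℝ (Set.Icc 0 Real.pi) (fun y => -Real.sin y) := by
    exact strictConcaveOn_sin_Icc.concaveOn.neg
  have hd : HasDerivAt (fun y => -Real.sin y) (-Real.cos t) t :=
    (Real.hasDerivAt_sin t).neg
  rcases lt_trichotomy x t with h | h | h
  · have := hconv.slope_le_of_hasDerivAt hx ht h hd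
    rw [slope_def_field] at this
    have hne : t - x > 0 := by linarith
    rw [div_le_iff₀ hne] at this
    nlinarith
  · subst h; simp
  · have := hconv.le_slope_of_hasDerivAt ht hx h hd
    rw [slope_def_field] at this
    have hne : x - t > 0 := by linarith
    rw [le_div_iff₀ hne] at this
    nlinarith

/-- BES (antipodal) lower bound for `s ≥ c₄.₉₇`: if `π + 1 < s` and
`2·arccos(−2/s) ≤ s − 1`, then `(1 + 2·arccos(−2/s))/s + √(1 − 4/s²)` is the greatest
value of `h(a) = (1 + a)/s + sin(a/2)` over `a ∈ [π, min (s − 1) (2π)]`, attained at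
`a = 2·arccos(−2/s)`. -/
theorem bes_antipodal_large (s : ℝ) (hs : Real.pi + 1 < s)
    (hc : 2 * Real.arccos (-2 / s) ≤ s - 1) :
    (∀ a ∈ Set.Icc Real.pi (min (s - 1) (2 * Real.pi)),
      (1 + a) / s + Real.sin (a / 2) ≤
        (1 + 2 * Real.arccos (-2 / s)) / s + Real.sqrt (1 - 4 / s ^ 2)) ∧
    2 * Real.arccos (-2 / s) ∈ Set.Icc Real.pi (min (s - 1) (2 * Real.pi)) ∧
    (1 + 2 * Real.arccos (-2 / s)) / s + Real.sin (2 * Real.arccos (-2 / s) / 2) =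
      (1 + 2 * Real.arccos (-2 / s)) / s + Real.sqrt (1 - 4 / s ^ 2) := by
  have hpi := Real.pi_pos
  have hs0 : (0:ℝ) < s := by linarith
  set t := Real.arccos (-2 / s) with ht_def
  have h2s : (0:ℝ) ≤ 2 / s := by positivity
  have hnp : -2 / s ≤ 0 := by rw [neg_div]; linarith
  have hm1 : (-1:ℝ) ≤ -2 / s := by
    rw [neg_div, neg_le_neg_iff, div_le_one hs0]; linarith [Real.pi_gt_three]
  have h1 : -2 / s ≤ 1 := by linarith
  have hcos : Real.cos t = -2 / s := Real.cos_arccos hm1 h1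
  have ht0 : 0 ≤ t := Real.arccos_nonneg _
  have htpi : t ≤ Real.pi := Real.arccos_le_pi _
  have htge : Real.pi / 2 ≤ t := by
    rw [ht_def, Real.arccos, le_sub_self_iff]
    exact Real.arcsin_nonpos.2 hnp
  have hsin : Real.sin t = Real.sqrt (1 - 4 / s ^ 2) := by
    rw [ht_def, Real.sin_arccos]
    congr 1
    rw [div_pow, neg_pow]
    norm_num
  have hmem : 2 * t ∈ Set.Icc Real.pi (min (s - 1) (2 * Real.pi)) := by
    constructor
    · linarith
    · exact le_min hc (by linarith)
  refine ⟨?_, hmem, by rw [show 2 * t / 2 = t by ring, hsin]⟩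
  intro a ha
  obtain ⟨ha1, ha2⟩ := ha
  have ha2' : a ≤ 2 * Real.pi := ha2.trans (min_le_right _ _)
  have hx : a / 2 ∈ Set.Icc 0 Real.pi := ⟨by linarith, by linarith⟩
  have key := sin_tangent_le hx ⟨ht0, htpi⟩
  rw [hcos] at key
  rw [← hsin]
  have : (a / 2 - t) * (-2 / s) = (2 * t - a) / s := by ring
  rw [this] at key
  have hsum : (1 + a) / s + (2 * t - a) / s = (1 + 2 * t) / s := by
    field_simp
    ring
  linarith
end

section
/- For every real s with 1.86 ≤ s ≤ 2, one has (1 + 2π)/s ≤ 1 + 2·√(1 − 1/(s+1)²) + (2·arccos(−1/(s+1)) − s + 1)/(s + 1). (Hence on this range the generalized Half-Chord strategy, with worst-case evacuation time (1 + 2π)/s, outperforms the Both-to-the-Same-Point strategy, whose worst-case evacuation time is BSP(s).) -/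
open Real

/-- Cubic lower bound for `arcsin` on `(0, 7/20]`. -/
lemma arcsin_cubic_lb {c : ℝ} (h0 : 0 < c) (h1 : c ≤ 7/20) :
    c + (7/50) * c ^ 3 ≤ Real.arcsin c := by
  have hc3 : c ^ 3 ≤ (7/20) ^ 3 := pow_le_pow_left₀ h0.le h1 3
  have hy0 : 0 < c + (7/50) * c ^ 3 := by positivity
  have hy36 : c + (7/50) * c ^ 3 ≤ 9/25 := by nlinarith
  have hy1 : c + (7/50) * c ^ 3 ≤ 1 := by linarith
  have hsb := Real.sin_bound (x := c + (7/50) * c ^ 3)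
    (by rw [abs_of_pos hy0]; exact hy1)
  rw [abs_of_pos hy0] at hsb
  have h2 : Real.sin (c + (7/50) * c ^ 3) ≤ (c + (7/50) * c ^ 3)
      - (c + (7/50) * c ^ 3) ^ 3 / 6 + (c + (7/50) * c ^ 3) ^ 4 * (5/96) :=
    by nlinarith [(abs_le.mp hsb).2, pow_pos hy0 4, mul_le_mul_of_nonneg_left hy1 (pow_pos hy0 4).le]
  have hcy : c ≤ c + (7/50) * c ^ 3 := by nlinarith [pow_pos h0 3]
  have hA : c ^ 3 ≤ (c + (7/50) * c ^ 3) ^ 3 := pow_le_pow_left₀ h0.le hcy 3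
  have hB : (c + (7/50) * c ^ 3) ^ 3 * (c + (7/50) * c ^ 3) ≤ (c + (7/50) * c ^ 3) ^ 3 * (9/25) :=
    mul_le_mul_of_nonneg_left hy36 (pow_pos hy0 3).le
  have hsin : Real.sin (c + (7/50) * c ^ 3) ≤ c := by nlinarith [hA, hB, pow_pos hy0 3]
  have hpi : (1:ℝ) ≤ π / 2 := by linarith [Real.pi_gt_three]
  have harc : Real.arcsin (Real.sin (c + (7/50) * c ^ 3)) = c + (7/50) * c ^ 3 :=
    Real.arcsin_sin (by linarith) (by linarith)
  calc c + (7/50) * c ^ 3 = Real.arcsin (Real.sin (c + (7/50) * c ^ 3)) := harc.symm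
    _ ≤ Real.arcsin c := Real.monotone_arcsin hsin

/-- Cubic lower bound for `√(1-u)` on `[0, 1/8]`. -/
lemma sqrt_cubic_lb {u : ℝ} (h0 : 0 ≤ u) (h1 : u ≤ 1/8) :
    1 - u/2 - u^2/8 - u^3/10 ≤ Real.sqrt (1 - u) := by
  rw [Real.le_sqrt (by nlinarith [sq_nonneg u, pow_nonneg h0 3]) (by linarith)]
  nlinarith [pow_nonneg h0 2, pow_nonneg h0 3, pow_nonneg h0 4, pow_nonneg h0 5, pow_nonneg h0 6]

set_option maxHeartbeats 1000000 in
/-- For `1.86 ≤ s ≤ 2`, the generalized Half-Chord worst-case time `(1 + 2π)/s` is at most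
the BSP worst-case time `1 + 2·√(1 − 1/(s+1)²) + (2·arccos(−1/(s+1)) − s + 1)/(s + 1)`. -/
theorem halfChord_beats_bsp (s : ℝ) (hs1 : 1.86 ≤ s) (hs2 : s ≤ 2) :
    (1 + 2 * Real.pi) / s ≤
      1 + 2 * Real.sqrt (1 - 1 / (s + 1) ^ 2) +
        (2 * Real.arccos (-1 / (s + 1)) - s + 1) / (s + 1) := by
  have hs0 : (0:ℝ) < s := by linarith
  have ht0 : (0:ℝ) < s + 1 := by linarith
  set c : ℝ := 1 / (s + 1) with hc
  have hc0 : 0 < c := by positivity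
  have hc35 : c ≤ 7/20 := by
    rw [hc, div_le_iff₀ ht0]; linarith
  -- arccos(-c) = π/2 + arcsin c
  have harccos : Real.arccos (-1 / (s + 1)) = π/2 + Real.arcsin c := by
    rw [show (-1 : ℝ) / (s+1) = -c by rw [hc]; ring, Real.arccos, Real.arcsin_neg]; ring
  have harcsin : c + (7/50) * c ^ 3 ≤ Real.arcsin c := arcsin_cubic_lb hc0 hc35
  -- sqrt bound with u = c^2
  have hu1 : c ^ 2 ≤ 1/8 := by nlinarith
  have hsqrt : 1 - c^2/2 - c^4/8 - c^6/10 ≤ Real.sqrt (1 - 1 / (s + 1) ^ 2) := by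
    have h := sqrt_cubic_lb (u := c^2) (by positivity) hu1
    have : (1 : ℝ) - 1 / (s+1)^2 = 1 - c^2 := by rw [hc]; field_simp
    rw [this]
    calc 1 - c^2/2 - c^4/8 - c^6/10 = 1 - c^2/2 - (c^2)^2/8 - (c^2)^3/10 := by ring
      _ ≤ Real.sqrt (1 - c^2) := h
  -- pi bounds
  have hpiu : π < 3.141593 := Real.pi_lt_d6
  -- reduce to rational inequality
  have hct : c * (s + 1) = 1 := by rw [hc]; field_simp
  have hc3 : (1:ℝ)/3 ≤ c := by rw [hc, div_le_div_iff₀ (by norm_num) ht0]; linarith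
  have hc286 : c ≤ 50/143 := by
    rw [hc, div_le_div_iff₀ ht0 (by norm_num)]; linarith
  have hsc : s * c = 1 - c := by rw [hc]; field_simp; ring
  have hpoly : c^2*(1+2*π) ≤
      (1 + 2*(1 - c^2/2 - c^4/8 - c^6/10))*c*(1-c)
      + (π + (2*c + (7/25)*c^3 + 1))*c^2*(1-c) - c*(1-c)^2 := by
    have h1 : 0 ≤ c - 1/3 := by linarith
    have h2 : 0 ≤ 50/143 - c := by linarith
    have hB : 0 ≤ 3.141593 - π := by linarith
    have h3c : 0 ≤ 3*c^2 - c := by nlinarith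
    nlinarith [mul_nonneg hB h3c, mul_nonneg h1 h2,
      mul_nonneg (mul_nonneg h1 h2) hc0.le,
      mul_nonneg (mul_nonneg h1 h2) (sq_nonneg c),
      mul_nonneg (mul_nonneg (mul_nonneg h1 h2) hc0.le) (sq_nonneg c),
      mul_nonneg (mul_nonneg (mul_nonneg h1 h2) (sq_nonneg c)) (sq_nonneg c),
      mul_nonneg (mul_nonneg h2 h2) (sq_nonneg c),
      mul_nonneg (mul_nonneg (mul_nonneg h2 h2) hc0.le) (sq_nonneg c),
      sq_nonneg (c - 1/3), hc0.le, sq_nonneg c]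
  have hid : ((1 + 2*(1 - c^2/2 - c^4/8 - c^6/10)
        + (π + 2*c + (7/25)*c^3 - s + 1)*c)*s)*c^2
      = (1 + 2*(1 - c^2/2 - c^4/8 - c^6/10))*c*(1-c)
      + (π + (2*c + (7/25)*c^3 + 1))*c^2*(1-c) - c*(1-c)^2 := by
    linear_combination ((1 + 2*(1 - c^2/2 - c^4/8 - c^6/10))*c
      + (π + (2*c + (7/25)*c^3 + 1))*c^2 - c*(s*c + 1 - c)) * hsc
  have key : (1 + 2*π)/s ≤ 1 + 2*(1 - c^2/2 - c^4/8 - c^6/10)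
      + (π + 2*c + (7/25)*c^3 - s + 1)/(s+1) := by
    rw [div_le_iff₀ hs0, show (π + 2*c + (7/25)*c^3 - s + 1)/(s+1)
      = (π + 2*c + (7/25)*c^3 - s + 1)*c by rw [hc]; field_simp]
    have h3 : (1+2*π) * c^2 ≤ ((1 + 2*(1 - c^2/2 - c^4/8 - c^6/10)
        + (π + 2*c + (7/25)*c^3 - s + 1)*c)*s) * c^2 := by linarith [hpoly, hid]
    exact le_of_mul_le_mul_right h3 (pow_pos hc0 2)
  refine key.trans ?_
  have h1 : π + 2*c + (7/25)*c^3 - s + 1 ≤ 2 * Real.arccos (-1 / (s + 1)) - s + 1 := by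
    rw [harccos]; linarith
  have h2 : (π + 2*c + (7/25)*c^3 - s + 1)/(s+1) ≤
      (2 * Real.arccos (-1 / (s + 1)) - s + 1)/(s+1) := by
    exact div_le_div_of_nonneg_right h1 ht0.le
  linarith
end
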